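/- arXiv:2001.10512 — 10 statements merged into one kernel-verified Lean document; each statement's English description precedes it below -/
import Mathlib

section
/- Rule get-read preserves the security condition: let b : Set (S × O × A), f1 : S → ℕ, f2 : O → ℕ, f3 : S → Set K, f4 : O → Set K, and suppose the state (b, f1, f2, f3, f4) satisfies the security condition. If s : S and o : O satisfy f2 o ≤ f1 s and f4 o ⊆ f3 s, then the state (b ∪ {(s, o, r)}, f1, f2, f3, f4) also satisfies the security condition. -/
/-- The state `(b, f1, f2, f3, f4)` satisfies the security condition. -/
def SecCond {S O K A : Type*} (r w e a c : A) (b : Set (S × O × A))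
    (f1 : S → ℕ) (f2 : O → ℕ) (f3 : S → Set K) (f4 : O → Set K) : Prop :=
  ∀ s o x, (s, o, x) ∈ b →
    x = e ∨ x = a ∨ x = c ∨ ((x = r ∨ x = w) ∧ f2 o ≤ f1 s ∧ f4 o ⊆ f3 s)

/-- Rule get-read preserves the security condition. -/
theorem getRead_preserves_secCond {S O K A : Type*} (r w e a c : A)
    (hdist : ([r, w, e, a, c] : List A).Pairwise (· ≠ ·))
    (b : Set (S × O × A)) (f1 : S → ℕ) (f2 : O → ℕ) (f3 : S → Set K) (f4 : O → Set K)
    (hsec : SecCond r w e a c b f1 f2 f3 f4)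
    (s : S) (o : O) (h1 : f2 o ≤ f1 s) (h2 : f4 o ⊆ f3 s) :
    SecCond r w e a c (b ∪ {(s, o, r)}) f1 f2 f3 f4 := by
  intro s' o' x hx
  rcases hx with hx | hx
  · exact hsec s' o' x hx
  · simp only [Set.mem_singleton_iff, Prod.mk.injEq] at hx
    obtain ⟨rfl, rfl, rfl⟩ := hx
    exact Or.inr (Or.inr (Or.inr ⟨Or.inl rfl, h1, h2⟩))
end

section
/- Rule get-read preserves the *-property: let b : Set (S × O × A), f2 : O → ℕ, f4 : O → Set K, and suppose the state (b, f2, f4) satisfies the *-property. Let s : S and o : O be such that for every object q with (s, q, w) ∈ b or (s, q, a) ∈ b, one has f2 o ≤ f2 q and f4 o ⊆ f4 q. Then the state (b ∪ {(s, o, r)}, f2, f4) also satisfies the *-property. -/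
/-- The state `(b, f2, f4)` satisfies the *-property. -/
def StarProp {S O K A : Type*} (r w a : A) (b : Set (S × O × A))
    (f2 : O → ℕ) (f4 : O → Set K) : Prop :=
  ∀ (s : S) (o1 o2 : O),
    ((s, o1, w) ∈ b ∨ (s, o1, a) ∈ b) → ((s, o2, r) ∈ b ∨ (s, o2, w) ∈ b) →
    f2 o2 ≤ f2 o1 ∧ f4 o2 ⊆ f4 o1

/-- Rule get-read preserves the *-property. -/
theorem getRead_preserves_starProp {S O K A : Type*} (r w e a c : A)
    (hdist : ([r, w, e, a, c] : List A).Pairwise (· ≠ ·))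
    (b : Set (S × O × A)) (f2 : O → ℕ) (f4 : O → Set K)
    (hstar : StarProp r w a b f2 f4)
    (s : S) (o : O)
    (h : ∀ q : O, ((s, q, w) ∈ b ∨ (s, q, a) ∈ b) → f2 o ≤ f2 q ∧ f4 o ⊆ f4 q) :
    StarProp r w a (b ∪ {(s, o, r)}) f2 f4 := by
  simp only [List.pairwise_cons] at hdist
  have hrw : r ≠ w := hdist.1 w (by simp)
  have hra : r ≠ a := hdist.1 a (by simp)
  intro s' o1 o2 h1 h2
  simp only [Set.mem_union, Set.mem_singleton_iff, Prod.mk.injEq] at h1 h2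
  have h1' : (s', o1, w) ∈ b ∨ (s', o1, a) ∈ b := by
    rcases h1 with (h1 | ⟨_, _, hw⟩) | (h1 | ⟨_, _, ha⟩)
    · exact Or.inl h1
    · exact absurd hw.symm hrw
    · exact Or.inr h1
    · exact absurd ha.symm hra
  rcases h2 with (h2 | ⟨hs, ho, _⟩) | (h2 | ⟨_, _, hw⟩)
  · exact hstar s' o1 o2 h1' (Or.inl h2)
  · subst hs ho; exact h o1 h1'
  · exact hstar s' o1 o2 h1' (Or.inr h2)
  · exact absurd hw.symm hrw
end

section
/- Rule get-write preserves the security condition: let b : Set (S × O × A), f1 : S → ℕ, f2 : O → ℕ, f3 : S → Set K, f4 : O → Set K, and suppose the state (b, f1, f2, f3, f4) satisfies the security condition. If s : S and o : O satisfy f2 o ≤ f1 s and f4 o ⊆ f3 s, then the state (b ∪ {(s, o, w)}, f1, f2, f3, f4) also satisfies the security condition. -/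
/-- Rule get-write preserves the security condition. -/
theorem getWrite_preserves_secCond {S O K A : Type*} (r w e a c : A)
    (hdist : ([r, w, e, a, c] : List A).Pairwise (· ≠ ·))
    (b : Set (S × O × A)) (f1 : S → ℕ) (f2 : O → ℕ) (f3 : S → Set K) (f4 : O → Set K)
    (hsec : SecCond r w e a c b f1 f2 f3 f4)
    (s : S) (o : O) (h1 : f2 o ≤ f1 s) (h2 : f4 o ⊆ f3 s) :
    SecCond r w e a c (b ∪ {(s, o, w)}) f1 f2 f3 f4 := by
  intro s' o' x hx
  rcases hx with h | h
  · exact hsec s' o' x h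
  · simp only [Set.mem_singleton_iff, Prod.mk.injEq] at h
    obtain ⟨hs, ho, hw⟩ := h
    subst hs ho hw
    exact Or.inr (Or.inr (Or.inr ⟨Or.inr rfl, h1, h2⟩))
end

section
/- Rule get-write preserves the *-property: let b : Set (S × O × A), f2 : O → ℕ, f4 : O → Set K, and suppose the state (b, f2, f4) satisfies the *-property. Let s : S and o : O be such that: (i) for every q with (s, q, r) ∈ b, f2 q ≤ f2 o and f4 q ⊆ f4 o; (ii) for every q with (s, q, a) ∈ b, f2 o ≤ f2 q and f4 o ⊆ f4 q; and (iii) for every q with (s, q, w) ∈ b, f2 o = f2 q and f4 o = f4 q. Then the state (b ∪ {(s, o, w)}, f2, f4) also satisfies the *-property. -/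
/-- Rule get-write preserves the *-property. -/
theorem getWrite_preserves_starProp {S O K A : Type*} (r w e a c : A)
    (hdist : ([r, w, e, a, c] : List A).Pairwise (· ≠ ·))
    (b : Set (S × O × A)) (f2 : O → ℕ) (f4 : O → Set K)
    (hstar : StarProp r w a b f2 f4)
    (s : S) (o : O)
    (hr : ∀ q : O, (s, q, r) ∈ b → f2 q ≤ f2 o ∧ f4 q ⊆ f4 o)
    (ha : ∀ q : O, (s, q, a) ∈ b → f2 o ≤ f2 q ∧ f4 o ⊆ f4 q)
    (hw : ∀ q : O, (s, q, w) ∈ b → f2 o = f2 q ∧ f4 o = f4 q) :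
    StarProp r w a (b ∪ {(s, o, w)}) f2 f4 := by
  simp only [List.pairwise_cons] at hdist
  have hrw : r ≠ w := hdist.1 w (by simp)
  have hwa : w ≠ a := hdist.2.1 a (by simp)
  intro s1 o1 o2 h1 h2
  simp only [Set.mem_union, Set.mem_singleton_iff, Prod.mk.injEq] at h1 h2
  rcases h1 with (h1 | h1) | (h1 | h1)
  · -- (s1,o1,w) ∈ b
    rcases h2 with (h2 | h2) | (h2 | h2)
    · exact hstar s1 o1 o2 (.inl h1) (.inl h2)
    · exact absurd h2.2.2 hrw
    · exact hstar s1 o1 o2 (.inl h1) (.inr h2)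
    · obtain ⟨rfl, rfl, -⟩ := h2
      obtain ⟨he2, he4⟩ := hw o1 h1
      exact ⟨he2.le, he4.le⟩
  · -- h1 new via w-component: (s1,o1,w)=(s,o,w)
    obtain ⟨rfl, rfl, -⟩ := h1
    rcases h2 with (h2 | h2) | (h2 | h2)
    · exact hr o2 h2
    · exact absurd h2.2.2 hrw
    · obtain ⟨he2, he4⟩ := hw o2 h2
      exact ⟨he2.ge, he4.ge⟩
    · obtain ⟨-, rfl, -⟩ := h2
      exact ⟨le_rfl, subset_rfl⟩
  · -- (s1,o1,a) ∈ b
    rcases h2 with (h2 | h2) | (h2 | h2)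
    · exact hstar s1 o1 o2 (.inr h1) (.inl h2)
    · exact absurd h2.2.2 hrw
    · exact hstar s1 o1 o2 (.inr h1) (.inr h2)
    · obtain ⟨rfl, rfl, -⟩ := h2
      exact ha o1 h1
  · exact absurd h1.2.2 hwa.symm
end

section
/- Rule get-append preserves the *-property: let b : Set (S × O × A), f2 : O → ℕ, f4 : O → Set K, and suppose the state (b, f2, f4) satisfies the *-property. Let s : S and o : O be such that for every object q with (s, q, r) ∈ b or (s, q, w) ∈ b, one has f2 q ≤ f2 o and f4 q ⊆ f4 o. Then the state (b ∪ {(s, o, a)}, f2, f4) also satisfies the *-property. -/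
/-- Rule get-append preserves the *-property. -/
theorem getAppend_preserves_starProp {S O K A : Type*} (r w e a c : A)
    (hdist : ([r, w, e, a, c] : List A).Pairwise (· ≠ ·))
    (b : Set (S × O × A)) (f2 : O → ℕ) (f4 : O → Set K)
    (hstar : StarProp r w a b f2 f4)
    (s : S) (o : O)
    (h : ∀ q : O, ((s, q, r) ∈ b ∨ (s, q, w) ∈ b) → f2 q ≤ f2 o ∧ f4 q ⊆ f4 o) :
    StarProp r w a (b ∪ {(s, o, a)}) f2 f4 := by
  simp only [List.pairwise_cons] at hdist
  have hra : r ≠ a := hdist.1 a (by simp)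
  have hwa : w ≠ a := hdist.2.1 a (by simp)
  intro s' o1 o2 h1 h2
  simp only [Set.mem_union, Set.mem_singleton_iff, Prod.mk.injEq] at h1 h2
  have h2' : (s', o2, r) ∈ b ∨ (s', o2, w) ∈ b := by
    rcases h2 with (h2 | ⟨_, _, h2⟩) | (h2 | ⟨_, _, h2⟩)
    · exact Or.inl h2
    · exact absurd h2 hra
    · exact Or.inr h2
    · exact absurd h2 hwa
  rcases h1 with (h1 | ⟨_, _, h1⟩) | (h1 | ⟨hs, ho, _⟩)
  · exact hstar s' o1 o2 (Or.inl h1) h2'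
  · exact absurd h1 hwa
  · exact hstar s' o1 o2 (Or.inr h1) h2'
  · subst hs ho
    exact h o2 h2'
end

section
/- Rule get-execute preserves the *-property: let b : Set (S × O × A), f2 : O → ℕ, f4 : O → Set K, and suppose the state (b, f2, f4) satisfies the *-property. Then for any s : S and o : O, the state (b ∪ {(s, o, e)}, f2, f4) also satisfies the *-property. -/
/-- Rule get-execute preserves the *-property. -/
theorem getExecute_preserves_starProp {S O K A : Type*} (r w e a c : A)
    (hdist : ([r, w, e, a, c] : List A).Pairwise (· ≠ ·))
    (b : Set (S × O × A)) (f2 : O → ℕ) (f4 : O → Set K)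
    (hstar : StarProp r w a b f2 f4)
    (s : S) (o : O) :
    StarProp r w a (b ∪ {(s, o, e)}) f2 f4 := by
  have hre : r ≠ e := by simp [List.pairwise_cons] at hdist; tauto
  have hwe : w ≠ e := by simp [List.pairwise_cons] at hdist; tauto
  have hae : e ≠ a := by simp [List.pairwise_cons] at hdist; tauto
  intro s' o1 o2 h12 h22
  apply hstar s' o1 o2
  · rcases h12 with h | h
    · rcases h with h | h
      · exact Or.inl h
      · simp only [Set.mem_singleton_iff, Prod.ext_iff] at h
        exact absurd h.2.2 hwe
    · rcases h with h | h
      · exact Or.inr h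
      · simp only [Set.mem_singleton_iff, Prod.ext_iff] at h
        exact absurd h.2.2.symm hae
  · rcases h22 with h | h
    · rcases h with h | h
      · exact Or.inl h
      · simp only [Set.mem_singleton_iff, Prod.ext_iff] at h
        exact absurd h.2.2 hre
    · rcases h with h | h
      · exact Or.inr h
      · simp only [Set.mem_singleton_iff, Prod.ext_iff] at h
        exact absurd h.2.2 hwe
end

section
/- The release, rescind and delete-object rules preserve the *-property: let b b' : Set (S × O × A) with b' ⊆ b, and let f2 : O → ℕ, f4 : O → Set K. If the state (b, f2, f4) satisfies the *-property, then the state (b', f2, f4) also satisfies the *-property. -/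
/-- The release, rescind and delete-object rules preserve the *-property:
the *-property is preserved when the access set shrinks. -/
theorem subset_preserves_starProp {S O K A : Type*} (r w e a c : A)
    (hdist : ([r, w, e, a, c] : List A).Pairwise (· ≠ ·))
    (b b' : Set (S × O × A)) (hsub : b' ⊆ b)
    (f2 : O → ℕ) (f4 : O → Set K)
    (hstar : StarProp r w a b f2 f4) :
    StarProp r w a b' f2 f4 := by
  intro s o1 o2 h1 h2
  exact hstar s o1 o2 (h1.imp (hsub ·) (hsub ·)) (h2.imp (hsub ·) (hsub ·))
end

section
/- Rules create-object and change-f preserve the security condition: let b : Set (S × O × A), f1 : S → ℕ, f2 : O → ℕ, f3 : S → Set K, f4 : O → Set K, and suppose the state (b, f1, f2, f3, f4) satisfies the security condition. Let o* : O be an object that does not occur in b, i.e., for all s : S, x : A, (s, o*, x) ∉ b. Then for any n : ℕ and c : Set K, the state (b, f1, Function.update f2 o* n, f3, Function.update f4 o* c) also satisfies the security condition. -/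
/-- Rules create-object and change-f preserve the security condition. -/
theorem createObject_changeF_preserves_secCond {S O K A : Type*} [DecidableEq O]
    (r w e a c : A)
    (hdist : ([r, w, e, a, c] : List A).Pairwise (· ≠ ·))
    (b : Set (S × O × A)) (f1 : S → ℕ) (f2 : O → ℕ) (f3 : S → Set K) (f4 : O → Set K)
    (hsec : SecCond r w e a c b f1 f2 f3 f4)
    (oStar : O) (hfresh : ∀ (s : S) (x : A), (s, oStar, x) ∉ b)
    (n : ℕ) (cl : Set K) :
    SecCond r w e a c b f1 (Function.update f2 oStar n) f3 (Function.update f4 oStar cl) := by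
  intro s o x hmem
  have ho : o ≠ oStar := fun h => hfresh s x (h ▸ hmem)
  simpa [Function.update_of_ne ho] using hsec s o x hmem
end

section
/- Rules create-object and change-f preserve the *-property: let b : Set (S × O × A), f2 : O → ℕ, f4 : O → Set K, and suppose the state (b, f2, f4) satisfies the *-property. Let o* : O be an object that does not occur in b, i.e., for all s : S, x : A, (s, o*, x) ∉ b. Then for any n : ℕ and c : Set K, the state (b, Function.update f2 o* n, Function.update f4 o* c) also satisfies the *-property. -/
/-- Rules create-object and change-f preserve the *-property. -/
theorem createObject_changeF_preserves_starProp {S O K A : Type*} [DecidableEq O]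
    (r w e a c : A)
    (hdist : ([r, w, e, a, c] : List A).Pairwise (· ≠ ·))
    (b : Set (S × O × A)) (f2 : O → ℕ) (f4 : O → Set K)
    (hstar : StarProp r w a b f2 f4)
    (oStar : O) (hfresh : ∀ (s : S) (x : A), (s, oStar, x) ∉ b)
    (n : ℕ) (cl : Set K) :
    StarProp r w a b (Function.update f2 oStar n) (Function.update f4 oStar cl) := by
  intro s o1 o2 h1 h2
  have ho1 : o1 ≠ oStar := by
    rintro rfl
    rcases h1 with h | h <;> exact hfresh s _ h
  have ho2 : o2 ≠ oStar := by
    rintro rfl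
    rcases h2 with h | h <;> exact hfresh s _ h
  simpa [Function.update_of_ne ho1, Function.update_of_ne ho2] using hstar s o1 o2 h1 h2
end

section
/- In the two-mode encoding of BLP, the normal clause of getWrite preserves the *-property: let Br Bw : Set (S × O) and fo : O → ℕ × Set K, and suppose the state (Br, Bw, fo) satisfies the *-property. Let s : S and o : O be such that for every (si, oi) ∈ Br with si = s, the class fo oi is dominated by fo o. Then the state (Br, Bw ∪ {(s, o)}, fo) also satisfies the *-property. -/
/-- Security class `p` is dominated by security class `q`. -/
def Dominated {K : Type*} (p q : ℕ × Set K) : Prop :=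
  p.1 ≤ q.1 ∧ p.2 ⊆ q.2

/-- The state `(Br, Bw, fo)` satisfies the *-property (two-mode encoding). -/
def StarProp2 {S O K : Type*} (Br Bw : Set (S × O)) (fo : O → ℕ × Set K) : Prop :=
  ∀ (s1 : S) (o1 : O) (s2 : S) (o2 : O),
    (s1, o1) ∈ Br → (s2, o2) ∈ Bw → s1 = s2 → Dominated (fo o1) (fo o2)

/-- In the two-mode encoding of BLP, the normal clause of getWrite preserves
the *-property. -/
theorem getWriteOk_preserves_starProp2 {S O K : Type*}
    (Br Bw : Set (S × O)) (fo : O → ℕ × Set K)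
    (hstar : StarProp2 Br Bw fo)
    (s : S) (o : O)
    (h : ∀ (si : S) (oi : O), (si, oi) ∈ Br → si = s → Dominated (fo oi) (fo o)) :
    StarProp2 Br (Bw ∪ {(s, o)}) fo := by
  intro s1 o1 s2 o2 hr hw heq
  rcases hw with hw | hw
  · exact hstar s1 o1 s2 o2 hr hw heq
  · obtain ⟨hs, ho⟩ := Prod.mk.injEq .. ▸ (Set.mem_singleton_iff.mp hw)
    subst hs ho
    exact h s1 o1 hr heq
end
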